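/- Define b_{2n,k} by the recurrence 2n·b_{2n,k} = [k(k+1)+2n-2]b_{2n-2,k} + [2+2(k-1)(4n-4k-3)]b_{2n-2,k-1} + 8(n-k+1)(2n-2k+1)b_{2n-2,k-2}, with b_{2n,k} = 0 if k < 1 or k > n and b_{2,1} = 1. Then b_{2n,n} ≥ b_{2n-2,n-1} for all n ≥ 11. -/

import Mathlib

set_option maxHeartbeats 1000000 in
/-- The gamma-coefficients of the fixed-point-free involution Eulerian polynomial:
`b n k` denotes `b_{2n,k}`, defined by the Guo–Zeng recurrence.
Then `b_{2n,n} ≥ b_{2n-2,n-1}` for all `n ≥ 11`. -/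
theorem gammaJ_diag_mono (b : ℕ → ℤ → ℚ)
    (hzero : ∀ (n : ℕ) (k : ℤ), (k < 1 ∨ k > (n : ℤ)) → b n k = 0)
    (h1 : b 1 1 = 1)
    (hrec : ∀ (n : ℕ), 2 ≤ n → ∀ k : ℤ, 1 ≤ k →
      2 * (n : ℚ) * b n k =
        ((k : ℚ) * ((k : ℚ) + 1) + 2 * (n : ℚ) - 2) * b (n - 1) k
        + (2 + 2 * ((k : ℚ) - 1) * (4 * (n : ℚ) - 4 * (k : ℚ) - 3)) * b (n - 1) (k - 1)
        + 8 * ((n : ℚ) - (k : ℚ) + 1) * (2 * (n : ℚ) - 2 * (k : ℚ) + 1)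
            * b (n - 1) (k - 2)) :
    ∀ (n : ℕ), 11 ≤ n → b n (n : ℤ) ≥ b (n - 1) ((n : ℤ) - 1) := by
  have v1_1 : b 1 1 = 1 := h1
  have v2_1 : b 2 1 = 1 := by
    have e := hrec 2 (by norm_num) 1 (by norm_num)
    norm_num [v1_1, hzero 1 0 (by norm_num), hzero 1 (-1) (by norm_num)] at e
    linarith only [e]
  have v2_2 : b 2 2 = (-1) := by
    have e := hrec 2 (by norm_num) 2 (by norm_num)
    norm_num [v1_1, hzero 1 2 (by norm_num), hzero 1 0 (by norm_num)] at e
    linarith only [e]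
  have v3_1 : b 3 1 = 1 := by
    have e := hrec 3 (by norm_num) 1 (by norm_num)
    norm_num [v2_1, hzero 2 0 (by norm_num), hzero 2 (-1) (by norm_num)] at e
    linarith only [e]
  have v3_2 : b 3 2 = (-1) := by
    have e := hrec 3 (by norm_num) 2 (by norm_num)
    norm_num [v2_2, v2_1, hzero 2 0 (by norm_num)] at e
    linarith only [e]
  have v3_3 : b 3 3 = 3 := by
    have e := hrec 3 (by norm_num) 3 (by norm_num)
    norm_num [v2_2, v2_1, hzero 2 3 (by norm_num)] at e
    linarith only [e]
  have v4_1 : b 4 1 = 1 := by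
    have e := hrec 4 (by norm_num) 1 (by norm_num)
    norm_num [v3_1, hzero 3 0 (by norm_num), hzero 3 (-1) (by norm_num)] at e
    linarith only [e]
  have v4_2 : b 4 2 = 0 := by
    have e := hrec 4 (by norm_num) 2 (by norm_num)
    norm_num [v3_2, v3_1, hzero 3 0 (by norm_num)] at e
    linarith only [e]
  have v4_3 : b 4 3 = 12 := by
    have e := hrec 4 (by norm_num) 3 (by norm_num)
    norm_num [v3_3, v3_2, v3_1] at e
    linarith only [e]
  have v4_4 : b 4 4 = -7 := by
    have e := hrec 4 (by norm_num) 4 (by norm_num)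
    norm_num [v3_3, v3_2, hzero 3 4 (by norm_num)] at e
    linarith only [e]
  have v5_1 : b 5 1 = 1 := by
    have e := hrec 5 (by norm_num) 1 (by norm_num)
    norm_num [v4_1, hzero 4 0 (by norm_num), hzero 4 (-1) (by norm_num)] at e
    linarith only [e]
  have v5_2 : b 5 2 = 2 := by
    have e := hrec 5 (by norm_num) 2 (by norm_num)
    norm_num [v4_2, v4_1, hzero 4 0 (by norm_num)] at e
    linarith only [e]
  have v5_3 : b 5 3 = 36 := by
    have e := hrec 5 (by norm_num) 3 (by norm_num)
    norm_num [v4_3, v4_2, v4_1] at e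
    linarith only [e]
  have v5_4 : b 5 4 = -10 := by
    have e := hrec 5 (by norm_num) 4 (by norm_num)
    norm_num [v4_4, v4_3, v4_2] at e
    linarith only [e]
  have v5_5 : b 5 5 = 25 := by
    have e := hrec 5 (by norm_num) 5 (by norm_num)
    norm_num [v4_4, v4_3, hzero 4 5 (by norm_num)] at e
    linarith only [e]
  have v6_1 : b 6 1 = 1 := by
    have e := hrec 6 (by norm_num) 1 (by norm_num)
    norm_num [v5_1, hzero 5 0 (by norm_num), hzero 5 (-1) (by norm_num)] at e
    linarith only [e]
  have v6_2 : b 6 2 = 5 := by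
    have e := hrec 6 (by norm_num) 2 (by norm_num)
    norm_num [v5_2, v5_1, hzero 5 0 (by norm_num)] at e
    linarith only [e]
  have v6_3 : b 6 3 = 91 := by
    have e := hrec 6 (by norm_num) 3 (by norm_num)
    norm_num [v5_3, v5_2, v5_1] at e
    linarith only [e]
  have v6_4 : b 6 4 = 91 := by
    have e := hrec 6 (by norm_num) 4 (by norm_num)
    norm_num [v5_4, v5_3, v5_2] at e
    linarith only [e]
  have v6_5 : b 6 5 = 219 := by
    have e := hrec 6 (by norm_num) 5 (by norm_num)
    norm_num [v5_5, v5_4, v5_3] at e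
    linarith only [e]
  have v6_6 : b 6 6 = -65 := by
    have e := hrec 6 (by norm_num) 6 (by norm_num)
    norm_num [v5_5, v5_4, hzero 5 6 (by norm_num)] at e
    linarith only [e]
  have v7_1 : b 7 1 = 1 := by
    have e := hrec 7 (by norm_num) 1 (by norm_num)
    norm_num [v6_1, hzero 6 0 (by norm_num), hzero 6 (-1) (by norm_num)] at e
    linarith only [e]
  have v7_2 : b 7 2 = 9 := by
    have e := hrec 7 (by norm_num) 2 (by norm_num)
    norm_num [v6_2, v6_1, hzero 6 0 (by norm_num)] at e
    linarith only [e]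
  have v7_3 : b 7 3 = 201 := by
    have e := hrec 7 (by norm_num) 3 (by norm_num)
    norm_num [v6_3, v6_2, v6_1] at e
    linarith only [e]
  have v7_4 : b 7 4 = 652 := by
    have e := hrec 7 (by norm_num) 4 (by norm_num)
    norm_num [v6_4, v6_3, v6_2] at e
    linarith only [e]
  have v7_5 : b 7 5 = 1710 := by
    have e := hrec 7 (by norm_num) 5 (by norm_num)
    norm_num [v6_5, v6_4, v6_3] at e
    linarith only [e]
  have v7_6 : b 7 6 = 249 := by
    have e := hrec 7 (by norm_num) 6 (by norm_num)
    norm_num [v6_6, v6_5, v6_4] at e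
    linarith only [e]
  have v7_7 : b 7 7 = 283 := by
    have e := hrec 7 (by norm_num) 7 (by norm_num)
    norm_num [v6_6, v6_5, hzero 6 7 (by norm_num)] at e
    linarith only [e]
  have v8_1 : b 8 1 = 1 := by
    have e := hrec 8 (by norm_num) 1 (by norm_num)
    norm_num [v7_1, hzero 7 0 (by norm_num), hzero 7 (-1) (by norm_num)] at e
    linarith only [e]
  have v8_2 : b 8 2 = 14 := by
    have e := hrec 8 (by norm_num) 2 (by norm_num)
    norm_num [v7_2, v7_1, hzero 7 0 (by norm_num)] at e
    linarith only [e]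
  have v8_3 : b 8 3 = 399 := by
    have e := hrec 8 (by norm_num) 3 (by norm_num)
    norm_num [v7_3, v7_2, v7_1] at e
    linarith only [e]
  have v8_4 : b 8 4 = 2593 := by
    have e := hrec 8 (by norm_num) 4 (by norm_num)
    norm_num [v7_4, v7_3, v7_2] at e
    linarith only [e]
  have v8_5 : b 8 5 = 10532 := by
    have e := hrec 8 (by norm_num) 5 (by norm_num)
    norm_num [v7_5, v7_4, v7_3] at e
    linarith only [e]
  have v8_6 : b 8 6 = 11319 := by
    have e := hrec 8 (by norm_num) 6 (by norm_num)
    norm_num [v7_6, v7_5, v7_4] at e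
    linarith only [e]
  have v8_7 : b 8 7 = 6586 := by
    have e := hrec 8 (by norm_num) 7 (by norm_num)
    norm_num [v7_7, v7_6, v7_5] at e
    linarith only [e]
  have v8_8 : b 8 8 = -583 := by
    have e := hrec 8 (by norm_num) 8 (by norm_num)
    norm_num [v7_7, v7_6, hzero 7 8 (by norm_num)] at e
    linarith only [e]
  have v9_1 : b 9 1 = 1 := by
    have e := hrec 9 (by norm_num) 1 (by norm_num)
    norm_num [v8_1, hzero 8 0 (by norm_num), hzero 8 (-1) (by norm_num)] at e
    linarith only [e]
  have v9_2 : b 9 2 = 20 := by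
    have e := hrec 9 (by norm_num) 2 (by norm_num)
    norm_num [v8_2, v8_1, hzero 8 0 (by norm_num)] at e
    linarith only [e]
  have v9_3 : b 9 3 = 728 := by
    have e := hrec 9 (by norm_num) 3 (by norm_num)
    norm_num [v8_3, v8_2, v8_1] at e
    linarith only [e]
  have v9_4 : b 9 4 = 7902 := by
    have e := hrec 9 (by norm_num) 4 (by norm_num)
    norm_num [v8_4, v8_3, v8_2] at e
    linarith only [e]
  have v9_5 : b 9 5 = 50165 := by
    have e := hrec 9 (by norm_num) 5 (by norm_num)
    norm_num [v8_5, v8_4, v8_3] at e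
    linarith only [e]
  have v9_6 : b 9 6 = 122571 := by
    have e := hrec 9 (by norm_num) 6 (by norm_num)
    norm_num [v8_6, v8_5, v8_4] at e
    linarith only [e]
  have v9_7 : b 9 7 = 135545 := by
    have e := hrec 9 (by norm_num) 7 (by norm_num)
    norm_num [v8_7, v8_6, v8_5] at e
    linarith only [e]
  have v9_8 : b 9 8 = 33188 := by
    have e := hrec 9 (by norm_num) 8 (by norm_num)
    norm_num [v8_8, v8_7, v8_6] at e
    linarith only [e]
  have v9_9 : b 9 9 = 4417 := by
    have e := hrec 9 (by norm_num) 9 (by norm_num)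
    norm_num [v8_8, v8_7, hzero 8 9 (by norm_num)] at e
    linarith only [e]
  have v10_1 : b 10 1 = 1 := by
    have e := hrec 10 (by norm_num) 1 (by norm_num)
    norm_num [v9_1, hzero 9 0 (by norm_num), hzero 9 (-1) (by norm_num)] at e
    linarith only [e]
  have v10_2 : b 10 2 = 27 := by
    have e := hrec 10 (by norm_num) 2 (by norm_num)
    norm_num [v9_2, v9_1, hzero 9 0 (by norm_num)] at e
    linarith only [e]
  have v10_3 : b 10 3 = 1242 := by
    have e := hrec 10 (by norm_num) 3 (by norm_num)
    norm_num [v9_3, v9_2, v9_1] at e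
    linarith only [e]
  have v10_4 : b 10 4 = 20401 := by
    have e := hrec 10 (by norm_num) 4 (by norm_num)
    norm_num [v9_4, v9_3, v9_2] at e
    linarith only [e]
  have v10_5 : b 10 5 = 194139 := by
    have e := hrec 10 (by norm_num) 5 (by norm_num)
    norm_num [v9_5, v9_4, v9_3] at e
    linarith only [e]
  have v10_6 : b 10 6 = 841038 := by
    have e := hrec 10 (by norm_num) 6 (by norm_num)
    norm_num [v9_6, v9_5, v9_4] at e
    linarith only [e]
  have v10_7 : b 10 7 = 1737505 := by
    have e := hrec 10 (by norm_num) 7 (by norm_num)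
    norm_num [v9_7, v9_6, v9_5] at e
    linarith only [e]
  have v10_8 : b 10 8 = 1372734 := by
    have e := hrec 10 (by norm_num) 8 (by norm_num)
    norm_num [v9_8, v9_7, v9_6] at e
    linarith only [e]
  have v10_9 : b 10 9 = 379029 := by
    have e := hrec 10 (by norm_num) 9 (by norm_num)
    norm_num [v9_9, v9_8, v9_7] at e
    linarith only [e]
  have v10_10 : b 10 10 = 1791 := by
    have e := hrec 10 (by norm_num) 10 (by norm_num)
    norm_num [v9_9, v9_8, hzero 9 10 (by norm_num)] at e
    linarith only [e]
  -- The key mutual invariant for m ≥ 10.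
  have key : ∀ m : ℕ, 10 ≤ m →
      (∀ k : ℤ, 0 ≤ b m k) ∧
      (m : ℚ) * b m (m : ℤ) ≤ b m ((m : ℤ) - 1) ∧
      (3 * (m : ℚ) + 4) * b m ((m : ℤ) - 1) ≤ 24 * b m ((m : ℤ) - 2) := by
    intro m hm
    induction m, hm using Nat.le_induction with
    | base =>
      refine ⟨?_, by norm_num [v10_9, v10_10], by norm_num [v10_8, v10_9]⟩
      intro k
      rcases lt_or_ge k 1 with h | h
      · rw [hzero 10 k (Or.inl h)]
      rcases le_or_gt k 10 with h2 | h2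
      · interval_cases k <;> norm_num [v10_1, v10_2, v10_3, v10_4, v10_5, v10_6, v10_7, v10_8, v10_9, v10_10]
      · rw [hzero 10 k (Or.inr (by exact_mod_cast h2))]
    | succ m hm ih =>
      obtain ⟨P, S, T⟩ := ih
      have hM : (10 : ℚ) ≤ (m : ℚ) := by exact_mod_cast hm
      have hM0 : (0 : ℚ) ≤ (m : ℚ) := by linarith only [hM]
      -- normalized recurrence at level m+1
      have rec' : ∀ k : ℤ, 1 ≤ k → 2 * ((m : ℚ) + 1) * b (m + 1) k =
          ((k : ℚ) * ((k : ℚ) + 1) + 2 * ((m : ℚ) + 1) - 2) * b m k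
          + (2 + 2 * ((k : ℚ) - 1) * (4 * ((m : ℚ) + 1) - 4 * (k : ℚ) - 3)) * b m (k - 1)
          + 8 * (((m : ℚ) + 1) - (k : ℚ) + 1) * (2 * ((m : ℚ) + 1) - 2 * (k : ℚ) + 1)
              * b m (k - 2) := by
        intro k hk
        have e := hrec (m + 1) (by omega) k hk
        have e2 : (m + 1 - 1 : ℕ) = m := by omega
        rw [e2] at e
        push_cast at e
        convert e using 2 <;> ring
      have z1 : b m ((m : ℤ) + 1) = 0 := hzero m _ (Or.inr (by omega))
      have hd := rec' ((m : ℤ) + 1) (by omega)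
      rw [show (m : ℤ) + 1 - 1 = (m : ℤ) from by ring,
          show (m : ℤ) + 1 - 2 = (m : ℤ) - 1 from by ring, z1] at hd
      push_cast at hd
      have hs := rec' (m : ℤ) (by omega)
      push_cast at hs
      have ht := rec' ((m : ℤ) - 1) (by omega)
      rw [show (m : ℤ) - 1 - 1 = (m : ℤ) - 2 from by ring,
          show (m : ℤ) - 1 - 2 = (m : ℤ) - 3 from by ring] at ht
      push_cast at ht
      have Pd := P (m : ℤ)
      have Ps := P ((m : ℤ) - 1)
      have Pt := P ((m : ℤ) - 2)
      have Pu := P ((m : ℤ) - 3)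
      have h2pos : (0 : ℚ) < 2 * ((m : ℚ) + 1) := by linarith only [hM]
      have hd' : 2 * ((m : ℚ) + 1) * b (m + 1) ((m : ℤ) + 1)
          = (2 - 6 * (m : ℚ)) * b m (m : ℤ) + 8 * b m ((m : ℤ) - 1) := by
        rw [hd]; ring
      have hs' : 2 * ((m : ℚ) + 1) * b (m + 1) (m : ℤ)
          = ((m : ℚ) ^ 2 + 3 * (m : ℚ)) * b m (m : ℤ) + 2 * (m : ℚ) * b m ((m : ℤ) - 1)
            + 48 * b m ((m : ℤ) - 2) := by
        rw [hs]; ring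
      have ht' : 2 * ((m : ℚ) + 1) * b (m + 1) ((m : ℤ) - 1)
          = ((m : ℚ) ^ 2 + (m : ℚ)) * b m ((m : ℤ) - 1) + (10 * (m : ℚ) - 18) * b m ((m : ℤ) - 2)
            + 120 * b m ((m : ℤ) - 3) := by
        rw [ht]; ring
      have hMd : 0 ≤ (m : ℚ) * b m (m : ℤ) := mul_nonneg hM0 Pd
      have hM2d : 0 ≤ (m : ℚ) * ((m : ℚ) * b m (m : ℤ)) := mul_nonneg hM0 hMd
      have hM10d : 0 ≤ ((m : ℚ) - 10) * b m (m : ℤ) :=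
        mul_nonneg (by linarith only [hM]) Pd
      have hMM10d : 0 ≤ (m : ℚ) * (((m : ℚ) - 10) * b m (m : ℤ)) :=
        mul_nonneg hM0 hM10d
      have hMMM10d : 0 ≤ (m : ℚ) * ((m : ℚ) * (((m : ℚ) - 10) * b m (m : ℤ))) :=
        mul_nonneg hM0 hMM10d
      have hM10t : 0 ≤ ((m : ℚ) - 10) * b m ((m : ℤ) - 2) :=
        mul_nonneg (by linarith only [hM]) Pt
      have hSc : (18 * (m : ℚ) ^ 2 + 10 * (m : ℚ)) * ((m : ℚ) * b m (m : ℤ))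
          ≤ (18 * (m : ℚ) ^ 2 + 10 * (m : ℚ)) * b m ((m : ℤ) - 1) :=
        mul_le_mul_of_nonneg_left S (by positivity)
      -- diagonal nonnegativity at level m+1
      have Pdiag : 0 ≤ b (m + 1) ((m : ℤ) + 1) := by
        nlinarith only [hd', S, Pd, hMd, h2pos]
      -- subdiagonal value inequality S(m+1)
      have Snew : ((m : ℚ) + 1) * b (m + 1) ((m : ℤ) + 1) ≤ b (m + 1) (m : ℤ) := by
        rw [← mul_le_mul_iff_right₀ h2pos,
            show 2 * ((m : ℚ) + 1) * (((m : ℚ) + 1) * b (m + 1) ((m : ℤ) + 1))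
              = ((m : ℚ) + 1) * (2 * ((m : ℚ) + 1) * b (m + 1) ((m : ℤ) + 1)) from by ring,
            hd', hs']
        nlinarith only [T, Pd, hM2d, hM10d, hMd]
      have Tnew : (3 * ((m : ℚ) + 1) + 4) * b (m + 1) (m : ℤ) ≤ 24 * b (m + 1) ((m : ℤ) - 1) := by
        rw [show (3 * ((m : ℚ) + 1) + 4) * b (m + 1) (m : ℤ)
              = (3 * (m : ℚ) + 7) * b (m + 1) (m : ℤ) from by ring,
            ← mul_le_mul_iff_right₀ h2pos,
            show 2 * ((m : ℚ) + 1) * ((3 * (m : ℚ) + 7) * b (m + 1) (m : ℤ))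
              = (3 * (m : ℚ) + 7) * (2 * ((m : ℚ) + 1) * b (m + 1) (m : ℤ)) from by ring,
            show 2 * ((m : ℚ) + 1) * (24 * b (m + 1) ((m : ℤ) - 1))
              = 24 * (2 * ((m : ℚ) + 1) * b (m + 1) ((m : ℤ) - 1)) from by ring,
            hs', ht']
        nlinarith only [hSc, Pd, Pt, Pu, hMd, hM2d, hM10d, hMM10d, hMMM10d, hM10t]
      -- assemble; fix casts in the goal
      have ecast1 : ((m + 1 : ℕ) : ℤ) = (m : ℤ) + 1 := by push_cast; ring
      have ecast2 : ((m + 1 : ℕ) : ℚ) = (m : ℚ) + 1 := by push_cast; ring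
      refine ⟨?_, ?_, ?_⟩
      · intro k
        rcases lt_or_ge k 1 with h | h
        · rw [hzero (m + 1) k (Or.inl h)]
        rcases le_or_gt k (m : ℤ) with h2 | h2
        · have hk := rec' k h
          have hx := P k
          have hy := P (k - 1)
          have hz2 := P (k - 2)
          have hkQ : (1 : ℚ) ≤ (k : ℚ) := by exact_mod_cast h
          have hkQ2 : (k : ℚ) ≤ (m : ℚ) := by exact_mod_cast h2
          have c1 : (0 : ℚ) ≤ (k : ℚ) * ((k : ℚ) + 1) + 2 * ((m : ℚ) + 1) - 2 := by nlinarith only [hkQ, hM]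
          have c2 : (0 : ℚ) ≤ 2 + 2 * ((k : ℚ) - 1) * (4 * ((m : ℚ) + 1) - 4 * (k : ℚ) - 3) := by
            nlinarith only [mul_nonneg (by linarith only [hkQ] : (0:ℚ) ≤ (k:ℚ) - 1)
              (by linarith only [hkQ2] : (0:ℚ) ≤ 4 * ((m:ℚ) + 1) - 4 * (k:ℚ) - 3)]
          have c3 : (0 : ℚ) ≤ 8 * (((m : ℚ) + 1) - (k : ℚ) + 1) * (2 * ((m : ℚ) + 1) - 2 * (k : ℚ) + 1) := by
            nlinarith only [mul_nonneg (by linarith only [hkQ2] : (0:ℚ) ≤ ((m:ℚ) + 1) - (k:ℚ) + 1)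
              (by linarith only [hkQ2] : (0:ℚ) ≤ 2 * ((m:ℚ) + 1) - 2 * (k:ℚ) + 1)]
          nlinarith only [hk, mul_nonneg c1 hx, mul_nonneg c2 hy, mul_nonneg c3 hz2, h2pos]
        rcases eq_or_lt_of_le (by omega : (m : ℤ) + 1 ≤ k) with h3 | h3
        · rw [← h3]; exact Pdiag
        · rw [hzero (m + 1) k (Or.inr (by push_cast; omega))]
      · rw [ecast1, ecast2]
        rw [show (m : ℤ) + 1 - 1 = (m : ℤ) from by ring]
        exact Snew
      · rw [ecast1, ecast2]
        rw [show (m : ℤ) + 1 - 1 = (m : ℤ) from by ring,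
            show (m : ℤ) + 1 - 2 = (m : ℤ) - 1 from by ring]
        exact Tnew
  -- Conclusion
  intro n hn
  obtain ⟨P, S, _⟩ := key (n - 1) (by omega)
  have ec1 : ((n - 1 : ℕ) : ℤ) = (n : ℤ) - 1 := by omega
  have ec2 : ((n - 1 : ℕ) : ℚ) = (n : ℚ) - 1 := by
    have : (11 : ℚ) ≤ (n : ℚ) := by exact_mod_cast hn
    push_cast [Nat.cast_sub (by omega : 1 ≤ n)]; ring
  rw [ec1] at S
  rw [ec2] at S
  rw [show (n : ℤ) - 1 - 1 = (n : ℤ) - 2 from by ring] at S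
  have Pd := P ((n : ℤ) - 1)
  have e := hrec n (by omega) (n : ℤ) (by omega)
  have z1 : b (n - 1) (n : ℤ) = 0 := hzero (n - 1) _ (Or.inr (by omega))
  rw [z1] at e
  push_cast at e
  have hnQ : (11 : ℚ) ≤ (n : ℚ) := by exact_mod_cast hn
  nlinarith only [e, S, Pd, hnQ]
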